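/- Let Φ be a root system for a finite real reflection group W, and let (C⃗, c⃗) be a nontrivial m-dependence in Φ with m ≥ 3, whose entries α_1,…,α_m are pairwise distinct and whose underlying set {α_1,…,α_m} is a circuit (so all c_i ≠ 0). Then for each 1 ≤ i ≤ m−1: (a) if ⟨c_iα_i, c_{i+1}α_{i+1}⟩ = 0, then wt(σ_i(C⃗,c⃗)) = wt(σ_i^{-1}(C⃗,c⃗)) = wt(c⃗); (b) if ⟨c_iα_i, c_{i+1}α_{i+1}⟩ > 0, then wt(σ_i(C⃗,c⃗)) > wt(c⃗) and wt(σ_i^{-1}(C⃗,c⃗)) > wt(c⃗); (c) if ⟨c_iα_i, c_{i+1}α_{i+1}⟩ < 0, then wt(σ_i(C⃗,c⃗)) < wt(c⃗) or wt(σ_i^{-1}(C⃗,c⃗)) < wt(c⃗). -/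

import Mathlib

open scoped RealInnerProductSpace

variable {V : Type*} [NormedAddCommGroup V] [InnerProductSpace ℝ V] [FiniteDimensional ℝ V]

/-- The orthogonal reflection in the hyperplane `α^⊥`. -/
noncomputable def reflAlong (α : V) : V ≃ₗᵢ[ℝ] V :=
  Submodule.reflection ((Submodule.span ℝ {α})ᗮ)

/-- An orthogonal reflection: the reflection through the hyperplane orthogonal to some
nonzero vector. -/
def IsReflection (g : V ≃ₗᵢ[ℝ] V) : Prop :=
  ∃ α : V, α ≠ 0 ∧ g = reflAlong α

/-- A finite real reflection group: a finite subgroup of the orthogonal group generated by its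
reflections and fixing no nonzero vector. -/
def IsReflectionGroup (W : Subgroup (V ≃ₗᵢ[ℝ] V)) : Prop :=
  (W : Set (V ≃ₗᵢ[ℝ] V)).Finite ∧
    Subgroup.closure {g | g ∈ W ∧ IsReflection g} = W ∧
    ∀ v : V, (∀ g ∈ W, g v = v) → v = 0
/-- A root system for `W`: a finite `W`-stable set of nonzero vectors, containing exactly two
opposite normal vectors for each reflecting hyperplane of a reflection of `W`. -/
def IsRootSystem (W : Subgroup (V ≃ₗᵢ[ℝ] V)) (Φ : Set V) : Prop :=
  Φ.Finite ∧
    (∀ g ∈ W, ∀ α ∈ Φ, g α ∈ Φ) ∧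
    (∀ α ∈ Φ, α ≠ 0 ∧ reflAlong α ∈ W) ∧
    (∀ α ∈ Φ, {x | x ∈ Φ ∧ ∃ r : ℝ, x = r • α} = {α, -α}) ∧
    (∀ g ∈ W, IsReflection g → ∃ α ∈ Φ, g = reflAlong α)
/-- A circuit: a finite linearly dependent set of vectors, every proper subset of which is
linearly independent. -/
def IsCircuit {V' : Type*} [AddCommGroup V'] [Module ℝ V'] (C : Set V') : Prop :=
  C.Finite ∧ ¬ LinearIndependent ℝ (fun x : C => (x : V')) ∧
    ∀ D : Set V', D ⊂ C → LinearIndependent ℝ (fun x : D => (x : V'))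

/-- The weight of a coefficient vector: the sum of absolute values of its entries. -/
noncomputable def wtFn {m : ℕ} (c : Fin m → ℝ) : ℝ := ∑ i, |c i|

/-- The coefficient vector obtained from the lifted Hurwitz move `σ_i` (at positions
`i, i1 = i+1`). -/
noncomputable def sigmaC {V' : Type*} [NormedAddCommGroup V'] [InnerProductSpace ℝ V']
    {m : ℕ} (α : Fin m → V') (c : Fin m → ℝ) (i i1 : Fin m) : Fin m → ℝ :=
  fun j =>
    if j = i then c i1 + 2 * ⟪α i, α i1⟫ / ⟪α i1, α i1⟫ * c i
    else if j = i1 then c i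
    else c j

/-- The coefficient vector obtained from the inverse lifted Hurwitz move `σ_i⁻¹`. -/
noncomputable def sigmaInvC {V' : Type*} [NormedAddCommGroup V'] [InnerProductSpace ℝ V']
    {m : ℕ} (α : Fin m → V') (c : Fin m → ℝ) (i i1 : Fin m) : Fin m → ℝ :=
  fun j =>
    if j = i then c i1
    else if j = i1 then c i + 2 * ⟪α i1, α i⟫ / ⟪α i, α i⟫ * c i1
    else c j

lemma abs_lt_abs_add' (x y : ℝ) (h : 0 < x * y) : |x| < |x + y| := by
  rcases mul_pos_iff.mp h with ⟨hx, hy⟩ | ⟨hx, hy⟩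
  · rw [abs_of_pos hx, abs_of_pos (by linarith : (0:ℝ) < x + y)]; linarith
  · rw [abs_of_neg hx, abs_of_neg (by linarith : x + y < 0)]; linarith

lemma abs_add_lt_abs' (x y : ℝ) (h : x * y < 0) (h2 : |y| < 2 * |x|) : |x + y| < |x| := by
  rcases mul_neg_iff.mp h with ⟨hx, hy⟩ | ⟨hx, hy⟩
  · rw [abs_of_pos hx] at h2 ⊢
    rw [abs_of_neg hy] at h2
    rw [abs_lt]; constructor <;> linarith
  · rw [abs_of_neg hx] at h2 ⊢
    rw [abs_of_pos hy] at h2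
    rw [abs_lt]; constructor <;> linarith

lemma wt_sub {m : ℕ} (c : Fin m → ℝ) (i i1 : Fin m) (h : i ≠ i1) (x y : ℝ) :
    wtFn (fun j => if j = i then y else if j = i1 then x else c j)
      = wtFn c - |c i| - |c i1| + |y| + |x| := by
  unfold wtFn
  have key : ∀ j : Fin m, |if j = i then y else if j = i1 then x else c j|
      = |c j| + ((if j = i then |y| - |c i| else 0) + (if j = i1 then |x| - |c i1| else 0)) := by
    intro j
    by_cases hj : j = i
    · subst hj; simp [h]
    · by_cases hj1 : j = i1 <;> simp [hj, hj1, Ne.symm h]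
  rw [Finset.sum_congr rfl (fun j _ => key j)]
  rw [Finset.sum_add_distrib, Finset.sum_add_distrib, Finset.sum_ite_eq' Finset.univ i,
    Finset.sum_ite_eq' Finset.univ i1]
  simp; ring

/-- How the lifted Hurwitz moves `σ_i, σ_i⁻¹` change the weight of a nontrivial `m`-dependence
supported on a circuit, according to the sign of `⟪c_i α_i, c_{i+1} α_{i+1}⟫`. -/
theorem stmt10 (W : Subgroup (V ≃ₗᵢ[ℝ] V)) (hW : IsReflectionGroup W)
    (Φ : Set V) (hΦ : IsRootSystem W Φ)
    (m : ℕ) (hm : 3 ≤ m) (α : Fin m → V) (c : Fin m → ℝ)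
    (hαΦ : ∀ j, α j ∈ Φ) (hinj : Function.Injective α)
    (hcirc : IsCircuit (Set.range α))
    (hne : c ≠ 0) (hdep : ∑ j, c j • α j = 0)
    (i i1 : Fin m) (hi1 : (i1 : ℕ) = (i : ℕ) + 1) :
    (⟪c i • α i, c i1 • α i1⟫ = 0 →
      wtFn (sigmaC α c i i1) = wtFn c ∧ wtFn (sigmaInvC α c i i1) = wtFn c) ∧
    (0 < ⟪c i • α i, c i1 • α i1⟫ →
      wtFn c < wtFn (sigmaC α c i i1) ∧ wtFn c < wtFn (sigmaInvC α c i i1)) ∧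
    (⟪c i • α i, c i1 • α i1⟫ < 0 →
      wtFn (sigmaC α c i i1) < wtFn c ∨ wtFn (sigmaInvC α c i i1) < wtFn c) := by
  have hine : i ≠ i1 := by
    intro h; rw [h] at hi1; omega
  -- linear independence of any proper subfamily
  have hindep : ∀ k : Fin m, LinearIndependent ℝ (fun l : {l : Fin m // l ≠ k} => α l) := by
    intro k
    have hss : α '' {l | l ≠ k} ⊂ Set.range α := by
      constructor
      · rintro _ ⟨l, -, rfl⟩; exact ⟨l, rfl⟩
      · intro hsub
        obtain ⟨l, hl, hlk⟩ := hsub ⟨k, rfl⟩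
        exact hl (hinj hlk)
    have hD := hcirc.2.2 _ hss
    have hcomp := hD.comp (fun l : {l : Fin m // l ≠ k} =>
        (⟨α l, ⟨l, l.2, rfl⟩⟩ : (α '' {l | l ≠ k})))
      (fun l1 l2 hl => Subtype.ext (hinj (Subtype.ext_iff.mp hl)))
    exact hcomp
  -- all coefficients nonzero
  have hcnz : ∀ j, c j ≠ 0 := by
    intro j hj0
    have hsum : ∑ l : {l : Fin m // l ≠ j}, c l • α l = 0 := by
      have h1 : ∑ l ∈ Finset.univ.erase j, c l • α l
          = ∑ l : {l : Fin m // l ≠ j}, c l • α l :=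
        Finset.sum_subtype _ (by simp) _
      rw [← h1, Finset.sum_erase_eq_sub (Finset.mem_univ j), hdep, hj0]
      simp
    have hall := Fintype.linearIndependent_iff.mp (hindep j) (fun l => c l) hsum
    apply hne
    funext l
    by_cases hl : l = j
    · rw [hl, hj0]; rfl
    · exact hall ⟨l, hl⟩
  -- pair independence of α i, α i1
  have hpair : ∀ x y : ℝ, x • α i + y • α i1 = 0 → x = 0 ∧ y = 0 := by
    obtain ⟨k, hki, hki1⟩ : ∃ k : Fin m, i ≠ k ∧ i1 ≠ k := by
      by_contra hcon
      push_neg at hcon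
      have hsub : (Finset.univ : Finset (Fin m)) ⊆ {i, i1} := by
        intro k _
        by_cases h : k = i
        · simp [h]
        · have := (hcon k (fun he => h he.symm)).symm
          simp [this]
      have := Finset.card_le_card hsub
      have h2 : ({i, i1} : Finset (Fin m)).card ≤ 2 := Finset.card_insert_le _ _ |>.trans (by simp)
      simp [Finset.card_univ] at this
      omega
    intro x y hxy
    set g : Fin 2 → {l : Fin m // l ≠ k} := fun t => if t = 0 then ⟨i, hki⟩ else ⟨i1, hki1⟩ with hg
    have hginj : Function.Injective g := by
      intro t1 t2 ht
      fin_cases t1 <;> fin_cases t2 <;> simp_all [g, Subtype.ext_iff]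
    have h2 := (hindep k).comp g hginj
    have hall := Fintype.linearIndependent_iff.mp h2 (fun t => if t = 0 then x else y)
      (by simp [Fin.sum_univ_two, g, hxy])
    exact ⟨hall 0, by simpa using hall 1⟩
  -- abbreviations
  have hanz : α i ≠ 0 := (hΦ.2.2.1 _ (hαΦ i)).1
  have hbnz : α i1 ≠ 0 := (hΦ.2.2.1 _ (hαΦ i1)).1
  set s : ℝ := ⟪α i, α i1⟫ with hs
  set na : ℝ := ⟪α i, α i⟫ with hna
  set nb : ℝ := ⟪α i1, α i1⟫ with hnb
  have hnapos : 0 < na := by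
    rw [hna, real_inner_self_eq_norm_sq]
    exact pow_pos (norm_pos_iff.mpr hanz) 2
  have hnbpos : 0 < nb := by
    rw [hnb, real_inner_self_eq_norm_sq]
    exact pow_pos (norm_pos_iff.mpr hbnz) 2
  have hsym : ⟪α i1, α i⟫ = s := real_inner_comm _ _
  have hinner : ⟪c i • α i, c i1 • α i1⟫ = c i * (c i1 * s) := by
    rw [real_inner_smul_left, real_inner_smul_right]
  -- weight formulas
  have hw1 : wtFn (sigmaC α c i i1)
      = wtFn c - |c i| - |c i1| + |c i1 + 2 * s / nb * c i| + |c i| := by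
    have : sigmaC α c i i1 = fun j =>
        if j = i then c i1 + 2 * s / nb * c i else if j = i1 then c i else c j := rfl
    rw [this, wt_sub c i i1 hine (c i) (c i1 + 2 * s / nb * c i)]
  have hw2 : wtFn (sigmaInvC α c i i1)
      = wtFn c - |c i| - |c i1| + |c i1| + |c i + 2 * s / na * c i1| := by
    have : sigmaInvC α c i i1 = fun j =>
        if j = i then c i1 else if j = i1 then c i + 2 * ⟪α i1, α i⟫ / na * c i1 else c j := rfl
    rw [this, hsym, wt_sub c i i1 hine (c i + 2 * s / na * c i1) (c i1)]
  have hci := hcnz i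
  have hci1 := hcnz i1
  refine ⟨?_, ?_, ?_⟩
  · -- zero case
    intro h0
    rw [hinner] at h0
    have hs0 : s = 0 := by
      rcases mul_eq_zero.mp h0 with h | h
      · exact absurd h hci
      · rcases mul_eq_zero.mp h with h' | h'
        · exact absurd h' hci1
        · exact h'
    rw [hs0] at hw1 hw2
    simp at hw1 hw2
    constructor <;> linarith
  · -- positive case
    intro hp
    rw [hinner] at hp
    constructor
    · have hprod : 0 < c i1 * (2 * s / nb * c i) := by
        have : c i1 * (2 * s / nb * c i) = 2 * (c i * (c i1 * s)) / nb := by ring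
        rw [this]
        exact div_pos (by linarith) hnbpos
      have := abs_lt_abs_add' (c i1) (2 * s / nb * c i) hprod
      linarith
    · have hprod : 0 < c i * (2 * s / na * c i1) := by
        have : c i * (2 * s / na * c i1) = 2 * (c i * (c i1 * s)) / na := by ring
        rw [this]
        exact div_pos (by linarith) hnapos
      have := abs_lt_abs_add' (c i) (2 * s / na * c i1) hprod
      linarith
  · -- negative case
    intro hnneg
    rw [hinner] at hnneg
    by_cases hcase : |2 * s / nb * c i| < 2 * |c i1|
    · left
      have hprod : c i1 * (2 * s / nb * c i) < 0 := by
        have heq : c i1 * (2 * s / nb * c i) = 2 * (c i * (c i1 * s)) / nb := by ring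
        rw [heq]
        exact div_neg_of_neg_of_pos (by linarith) hnbpos
      have := abs_add_lt_abs' (c i1) (2 * s / nb * c i) hprod hcase
      linarith
    · right
      -- derive strict Cauchy–Schwarz from pair independence
      have hcs : s * s < na * nb := by
        set v : V := nb • α i - s • α i1 with hv
        have hvne : v ≠ 0 := by
          intro hv0
          have : nb • α i + (-s) • α i1 = 0 := by
            rw [neg_smul, ← sub_eq_add_neg]; exact hv0
          have := (hpair nb (-s) this).1
          linarith
        have hvpos : 0 < ⟪v, v⟫ := by
          rw [real_inner_self_eq_norm_sq]
          exact pow_pos (norm_pos_iff.mpr hvne) 2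
        have hexp : ⟪v, v⟫ = nb * (na * nb - s * s) := by
          rw [hv]
          simp only [inner_sub_left, inner_sub_right, real_inner_smul_left,
            real_inner_smul_right, hsym, ← hs, ← hna, ← hnb]
          ring
        nlinarith
      have hkey : |2 * s / na * c i1| < 2 * |c i| := by
        by_contra hk
        push_neg at hk
        push_neg at hcase
        have habs1 : |2 * s / nb * c i| = 2 * |s| * |c i| / nb := by
          rw [abs_mul, abs_div, abs_mul, abs_of_pos hnbpos, abs_two]
          ring
        have habs2 : |2 * s / na * c i1| = 2 * |s| * |c i1| / na := by
          rw [abs_mul, abs_div, abs_mul, abs_of_pos hnapos, abs_two]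
          ring
        rw [habs1] at hcase
        rw [habs2] at hk
        have h1 : nb * |c i1| ≤ |s| * |c i| := by
          rw [le_div_iff₀ hnbpos] at hcase
          nlinarith
        have h2 : na * |c i| ≤ |s| * |c i1| := by
          rw [le_div_iff₀ hnapos] at hk
          nlinarith
        have hcipos : 0 < |c i| := abs_pos.mpr hci
        have hci1pos : 0 < |c i1| := abs_pos.mpr hci1
        have hss : s * s = |s| * |s| := (abs_mul_abs_self s).symm
        have key2 : na * nb * (|c i| * |c i1|) ≤ s * s * (|c i| * |c i1|) := by
          have h3 := mul_le_mul h1 h2 (by positivity) (by positivity)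
          calc na * nb * (|c i| * |c i1|) = nb * |c i1| * (na * |c i|) := by ring
            _ ≤ |s| * |c i| * (|s| * |c i1|) := h3
            _ = |s| * |s| * (|c i| * |c i1|) := by ring
            _ = s * s * (|c i| * |c i1|) := by rw [hss]
        have key3 := mul_lt_mul_of_pos_right hcs (mul_pos hcipos hci1pos)
        linarith
      have hprod : c i * (2 * s / na * c i1) < 0 := by
        have heq : c i * (2 * s / na * c i1) = 2 * (c i * (c i1 * s)) / na := by ring
        rw [heq]
        exact div_neg_of_neg_of_pos (by linarith) hnapos
      have := abs_add_lt_abs' (c i) (2 * s / na * c i1) hprod hkey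
      linarith
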